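/- Suppose the pair (G, X) is amenable, witnessed by a sequence (f_n) of nonnegative measurable functions on X with ∫_X f_n dμ = 1 such that for every compact set K ⊆ G, sup_{g ∈ K} ∫_X |f_n(g⁻¹·x)·χ(g⁻¹, x) − f_n(x)| dμ(x) → 0 as n → ∞. Then there exists a sequence of probability measures (μ_n) on X and measurable functions χ_n : G × X → ℝ≥0 such that: (a) each μ_n is mutually absolutely continuous with μ; (b) each χ_n is a Radon–Nikodym cocycle for the G-action with respect to μ_n, i.e. ∫ f(g·x)·χ_n(g, x) dμ_n(x) = ∫ f(x) dμ_n(x) for every g ∈ G and every nonnegative measurable f; and (c) for every compact set K ⊆ G, sup_{g ∈ K} ∫_X |√(χ_n(g, x)) − 1| dμ_n(x) → 0 as n → ∞. -/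

import Mathlib

open MeasureTheory Filter Set
open scoped ENNReal

lemma sq_sqrt_sub_le {a b : ℝ} (ha : 0 ≤ a) (hb : 0 ≤ b) :
    (Real.sqrt a - Real.sqrt b)^2 ≤ |a - b| := by
  have h1 : |Real.sqrt a - Real.sqrt b| ≤ Real.sqrt a + Real.sqrt b := by
    have := Real.sqrt_nonneg a; have := Real.sqrt_nonneg b
    rw [abs_sub_le_iff]; constructor <;> linarith
  have h3 : |Real.sqrt a - Real.sqrt b| * (Real.sqrt a + Real.sqrt b) = |a - b| := by
    rw [← abs_of_nonneg (by positivity : (0:ℝ) ≤ Real.sqrt a + Real.sqrt b), ← abs_mul]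
    congr 1
    nlinarith [Real.sq_sqrt ha, Real.sq_sqrt hb]
  calc (Real.sqrt a - Real.sqrt b)^2
      = |Real.sqrt a - Real.sqrt b| * |Real.sqrt a - Real.sqrt b| := by rw [← sq_abs, sq]
    _ ≤ |Real.sqrt a - Real.sqrt b| * (Real.sqrt a + Real.sqrt b) :=
        mul_le_mul_of_nonneg_left h1 (abs_nonneg _)
    _ = |a - b| := h3

/-- Lemma 2.2: if the pair `(G, X)` is amenable, witnessed by an asymptotically invariant
sequence `(f_n)` of densities, then there are probability measures `μ_n ∼ μ` with
Radon–Nikodym cocycles `χ_n` such that `sup_{g ∈ K} ∫ |√(χ_n(g, x)) − 1| dμ_n → 0` for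
every compact `K ⊆ G`. -/
theorem exists_asymptotically_invariant_measures
    {G X : Type*}
    [Group G] [TopologicalSpace G] [IsTopologicalGroup G] [LocallyCompactSpace G]
    [SecondCountableTopology G] [T2Space G] [MeasurableSpace G] [BorelSpace G]
    [MeasurableSpace X] [StandardBorelSpace X]
    [MulAction G X] (hact : Measurable fun p : G × X => p.1 • p.2)
    (μ : Measure X) [IsProbabilityMeasure μ]
    -- the Radon–Nikodym cocycle of the action
    (χ : G → X → ℝ)
    (hχmeas : Measurable fun p : G × X => χ p.1 p.2)
    (hχnonneg : ∀ g x, 0 ≤ χ g x)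
    (hχRN : ∀ g : G, ∀ f : X → ℝ≥0∞, Measurable f →
      ∫⁻ x, f (g • x) * ENNReal.ofReal (χ g x) ∂μ = ∫⁻ x, f x ∂μ)
    (hχcoc : ∀ g h : G, ∀ᵐ x ∂μ, χ (g * h) x = χ g (h • x) * χ h x)
    -- the pair `(G, X)` is amenable
    (f : ℕ → X → ℝ)
    (hfmeas : ∀ n, Measurable (f n)) (hfnonneg : ∀ n x, 0 ≤ f n x)
    (hfint : ∀ n, ∫ x, f n x ∂μ = 1)
    (hfinv : ∀ K : Set G, IsCompact K → ∀ ε : ℝ, 0 < ε → ∃ N : ℕ, ∀ n ≥ N, ∀ g ∈ K,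
      ∫ x, |f n (g⁻¹ • x) * χ g⁻¹ x - f n x| ∂μ ≤ ε) :
    ∃ (μn : ℕ → Measure X) (χn : ℕ → G → X → ℝ),
      (∀ n, IsProbabilityMeasure (μn n)) ∧
      -- (a) each `μ_n` is equivalent to `μ`
      (∀ n, μn n ≪ μ ∧ μ ≪ μn n) ∧
      (∀ n, Measurable fun p : G × X => χn n p.1 p.2) ∧
      (∀ n g x, 0 ≤ χn n g x) ∧
      -- (b) `χ_n` is a Radon–Nikodym cocycle for the action with respect to `μ_n`
      (∀ n, ∀ g : G, ∀ f' : X → ℝ≥0∞, Measurable f' →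
        ∫⁻ x, f' (g • x) * ENNReal.ofReal (χn n g x) ∂(μn n) = ∫⁻ x, f' x ∂(μn n)) ∧
      -- (c) asymptotic invariance, uniformly on compact sets
      (∀ K : Set G, IsCompact K → ∀ ε : ℝ, 0 < ε → ∃ N : ℕ, ∀ n ≥ N, ∀ g ∈ K,
        ∫ x, |Real.sqrt (χn n g x) - 1| ∂(μn n) ≤ ε) := by
  classical
  -- the perturbation constants
  set c : ℕ → ℝ := fun n => (1/2 : ℝ) ^ n with hc_def
  have hc_pos : ∀ n, 0 < c n := fun n => pow_pos (by norm_num) n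
  have hc1 : ∀ n, (0:ℝ) < 1 + c n := fun n => by have := hc_pos n; linarith
  -- the perturbed densities
  set h : ℕ → X → ℝ := fun n x => (f n x + c n) / (1 + c n) with hh_def
  have hh_pos : ∀ n x, 0 < h n x := fun n x =>
    div_pos (add_pos_of_nonneg_of_pos (hfnonneg n x) (hc_pos n)) (hc1 n)
  have hhmeas : ∀ n, Measurable (h n) := fun n => ((hfmeas n).add_const _).div_const _
  set H : ℕ → X → ℝ≥0∞ := fun n x => ENNReal.ofReal (h n x) with hH_def
  have hHmeas : ∀ n, Measurable (H n) := fun n => (hhmeas n).ennreal_ofReal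
  have hHne0 : ∀ n x, H n x ≠ 0 := fun n x => (ENNReal.ofReal_pos.2 (hh_pos n x)).ne'
  -- integrability of f n
  have hfint' : ∀ n, Integrable (f n) μ := by
    intro n
    by_contra hI
    have h1 := hfint n
    rw [integral_undef hI] at h1
    norm_num at h1
  have hfl : ∀ n, ∫⁻ x, ENNReal.ofReal (f n x) ∂μ = 1 := by
    intro n
    rw [← ofReal_integral_eq_lintegral_ofReal (hfint' n)
      (Filter.Eventually.of_forall (hfnonneg n)), hfint n, ENNReal.ofReal_one]
  -- total mass of the densities
  have hHint : ∀ n, ∫⁻ x, H n x ∂μ = 1 := by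
    intro n
    have e : ∀ x, H n x = ENNReal.ofReal (f n x + c n) * ENNReal.ofReal ((1 + c n)⁻¹) := by
      intro x
      show ENNReal.ofReal ((f n x + c n) / (1 + c n)) = _
      rw [div_eq_mul_inv, ENNReal.ofReal_mul (add_nonneg (hfnonneg n x) (hc_pos n).le)]
    calc ∫⁻ x, H n x ∂μ
        = ∫⁻ x, ENNReal.ofReal (f n x + c n) * ENNReal.ofReal ((1 + c n)⁻¹) ∂μ :=
          lintegral_congr e
      _ = (∫⁻ x, ENNReal.ofReal (f n x + c n) ∂μ) * ENNReal.ofReal ((1 + c n)⁻¹) :=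
          lintegral_mul_const _ ((hfmeas n).add_const _).ennreal_ofReal
      _ = 1 := by
          have : ∫⁻ x, ENNReal.ofReal (f n x + c n) ∂μ
              = ENNReal.ofReal (1 + c n) := by
            simp_rw [fun x => ENNReal.ofReal_add (hfnonneg n x) (hc_pos n).le]
            rw [lintegral_add_right _ measurable_const, hfl n, lintegral_const,
              measure_univ, mul_one, ENNReal.ofReal_add zero_le_one (hc_pos n).le,
              ENNReal.ofReal_one]
          rw [this, ← ENNReal.ofReal_mul (hc1 n).le, mul_inv_cancel₀ (hc1 n).ne',
            ENNReal.ofReal_one]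
  set μn : ℕ → Measure X := fun n => μ.withDensity (H n) with hμn_def
  set χn : ℕ → G → X → ℝ := fun n g x => χ g x * h n (g • x) / h n x with hχn_def
  have hχnnonneg : ∀ n g x, 0 ≤ χn n g x := fun n g x =>
    div_nonneg (mul_nonneg (hχnonneg g x) (hh_pos n (g • x)).le) (hh_pos n x).le
  have hχnmeas : ∀ n, Measurable fun p : G × X => χn n p.1 p.2 := by
    intro n
    exact (hχmeas.mul ((hhmeas n).comp hact)).div ((hhmeas n).comp measurable_snd)
  -- key multiplicative identity
  have hkey : ∀ n g x, ENNReal.ofReal (χn n g x) * H n x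
      = H n (g • x) * ENNReal.ofReal (χ g x) := by
    intro n g x
    rw [← ENNReal.ofReal_mul (hχnnonneg n g x), ← ENNReal.ofReal_mul (hh_pos n (g • x)).le]
    congr 1
    show (χ g x * h n (g • x) / h n x) * h n x = h n (g • x) * χ g x
    rw [div_mul_cancel₀ _ (hh_pos n x).ne', mul_comm]
  -- (b)
  have hsmul : ∀ g : G, Measurable fun x : X => g • x := fun g =>
    hact.comp (measurable_const.prodMk measurable_id)
  have hχg : ∀ g : G, Measurable fun x : X => χ g x := fun g =>
    hχmeas.comp (measurable_const.prodMk measurable_id)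
  have hχng : ∀ n (g : G), Measurable fun x : X => χn n g x := fun n g =>
    (hχnmeas n).comp (measurable_const.prodMk measurable_id)
  have hb : ∀ n, ∀ g : G, ∀ f' : X → ℝ≥0∞, Measurable f' →
      ∫⁻ x, f' (g • x) * ENNReal.ofReal (χn n g x) ∂(μn n) = ∫⁻ x, f' x ∂(μn n) := by
    intro n g f' hf'
    have hF : Measurable fun x => f' x * H n x := hf'.mul (hHmeas n)
    have hmg : Measurable fun x => f' (g • x) * ENNReal.ofReal (χn n g x) :=
      (hf'.comp (hsmul g)).mul (hχng n g).ennreal_ofReal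
    rw [hμn_def]
    simp only
    rw [lintegral_withDensity_eq_lintegral_mul _ (hHmeas n) hmg,
      lintegral_withDensity_eq_lintegral_mul _ (hHmeas n) hf']
    have e1 : ∀ x, (H n * fun x => f' (g • x) * ENNReal.ofReal (χn n g x)) x
        = (fun x => f' x * H n x) (g • x) * ENNReal.ofReal (χ g x) := by
      intro x
      simp only [Pi.mul_apply]
      calc H n x * (f' (g • x) * ENNReal.ofReal (χn n g x))
          = f' (g • x) * (ENNReal.ofReal (χn n g x) * H n x) := by ring
        _ = f' (g • x) * (H n (g • x) * ENNReal.ofReal (χ g x)) := by rw [hkey]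
        _ = f' (g • x) * H n (g • x) * ENNReal.ofReal (χ g x) := by ring
    rw [lintegral_congr e1, hχRN g _ hF]
    exact lintegral_congr fun x => mul_comm _ _
  refine ⟨μn, χn, ?_, ?_, hχnmeas, hχnnonneg, hb, ?_⟩
  · intro n
    constructor
    rw [hμn_def]
    simp [hHint n]
  · intro n
    exact ⟨withDensity_absolutelyContinuous μ (H n),
      withDensity_absolutelyContinuous' (hHmeas n).aemeasurable
        (Filter.Eventually.of_forall fun x => hHne0 n x)⟩
  · -- (c)
    intro K hK ε hε
    -- basic lintegral facts
    have hχl : ∀ g : G, ∫⁻ x, ENNReal.ofReal (χ g x) ∂μ = 1 := by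
      intro g
      have := hχRN g (fun _ => 1) measurable_const
      simpa using this
    have hB2 : ∀ g : G, ∫⁻ x, ENNReal.ofReal |χ g x - 1| ∂μ ≤ 2 := by
      intro g
      calc ∫⁻ x, ENNReal.ofReal |χ g x - 1| ∂μ
          ≤ ∫⁻ x, (ENNReal.ofReal (χ g x) + 1) ∂μ := by
            refine lintegral_mono fun x => ?_
            rw [← ENNReal.ofReal_one, ← ENNReal.ofReal_add (hχnonneg g x) zero_le_one]
            refine ENNReal.ofReal_le_ofReal ?_
            calc |χ g x - 1| ≤ |χ g x| + |1| := abs_sub _ _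
              _ = χ g x + 1 := by rw [abs_of_nonneg (hχnonneg g x), abs_one]
        _ = 2 := by
            rw [lintegral_add_right _ measurable_const, hχl g, lintegral_const,
              measure_univ, mul_one]
            norm_num
    have hfgl : ∀ n (g : G), ∫⁻ x, ENNReal.ofReal (f n (g • x) * χ g x) ∂μ = 1 := by
      intro n g
      have h2 := hχRN g (fun x => ENNReal.ofReal (f n x)) (hfmeas n).ennreal_ofReal
      rw [← hfl n, ← h2]
      refine lintegral_congr fun x => ?_
      show ENNReal.ofReal (f n (g • x) * χ g x)
          = ENNReal.ofReal (f n (g • x)) * ENNReal.ofReal (χ g x)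
      exact ENNReal.ofReal_mul (hfnonneg n (g • x))
    have hDmeas : ∀ n (g : G), Measurable fun x => f n (g • x) * χ g x - f n x :=
      fun n g => (((hfmeas n).comp (hsmul g)).mul (hχg g)).sub (hfmeas n)
    have hDlin : ∀ n (g : G),
        ∫⁻ x, ENNReal.ofReal |f n (g • x) * χ g x - f n x| ∂μ ≤ 2 := by
      intro n g
      calc ∫⁻ x, ENNReal.ofReal |f n (g • x) * χ g x - f n x| ∂μ
          ≤ ∫⁻ x, (ENNReal.ofReal (f n (g • x) * χ g x) + ENNReal.ofReal (f n x)) ∂μ := by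
            refine lintegral_mono fun x => ?_
            rw [← ENNReal.ofReal_add (mul_nonneg (hfnonneg n (g • x)) (hχnonneg g x))
              (hfnonneg n x)]
            refine ENNReal.ofReal_le_ofReal ?_
            calc |f n (g • x) * χ g x - f n x| ≤ |f n (g • x) * χ g x| + |f n x| := abs_sub _ _
              _ = f n (g • x) * χ g x + f n x := by
                  rw [abs_of_nonneg (mul_nonneg (hfnonneg n (g • x)) (hχnonneg g x)),
                    abs_of_nonneg (hfnonneg n x)]
        _ = 2 := by
            rw [lintegral_add_right _ (hfmeas n).ennreal_ofReal, hfgl n g, hfl n]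
            norm_num
    have hDint : ∀ n (g : G), Integrable (fun x => f n (g • x) * χ g x - f n x) μ := by
      intro n g
      refine ⟨(hDmeas n g).aestronglyMeasurable, ?_⟩
      rw [hasFiniteIntegral_iff_norm]
      refine lt_of_le_of_lt ?_ (by norm_num : (2:ℝ≥0∞) < ⊤)
      simpa [Real.norm_eq_abs] using hDlin n g
    -- pointwise bound on the numerator
    have pt : ∀ n (g : G) x, |χ g x * h n (g • x) - h n x|
        ≤ |f n (g • x) * χ g x - f n x| + c n * |χ g x - 1| := by
      intro n g x
      have hcn := hc_pos n
      have e : χ g x * h n (g • x) - h n x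
          = ((f n (g • x) * χ g x - f n x) + c n * (χ g x - 1)) / (1 + c n) := by
        rw [hh_def]
        simp only
        field_simp
        ring
      rw [e, abs_div, abs_of_pos (hc1 n)]
      calc |f n (g • x) * χ g x - f n x + c n * (χ g x - 1)| / (1 + c n)
          ≤ |f n (g • x) * χ g x - f n x + c n * (χ g x - 1)| :=
            div_le_self (abs_nonneg _) (by linarith)
        _ ≤ |f n (g • x) * χ g x - f n x| + |c n * (χ g x - 1)| := abs_add_le _ _
        _ = |f n (g • x) * χ g x - f n x| + c n * |χ g x - 1| := by
            rw [abs_mul, abs_of_pos hcn]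
    -- pointwise identity for the Cauchy–Schwarz step
    have ptc : ∀ n (g : G) x, h n x * |Real.sqrt (χn n g x) - 1|
        = Real.sqrt (h n x) * |Real.sqrt (χ g x * h n (g • x)) - Real.sqrt (h n x)| := by
      intro n g x
      have ha0 : 0 ≤ χ g x * h n (g • x) := mul_nonneg (hχnonneg g x) (hh_pos n (g • x)).le
      have hb0 := hh_pos n x
      have hbb : Real.sqrt (h n x) * Real.sqrt (h n x) = h n x := Real.mul_self_sqrt hb0.le
      have key1 : Real.sqrt (χ g x * h n (g • x) / h n x) * h n x
          = Real.sqrt (χ g x * h n (g • x)) * Real.sqrt (h n x) := by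
        rw [Real.sqrt_div ha0, div_mul_eq_mul_div, mul_div_assoc, Real.div_sqrt]
      have e1 : h n x * |Real.sqrt (χn n g x) - 1|
          = |Real.sqrt (χn n g x) * h n x - h n x| := by
        rw [show Real.sqrt (χn n g x) * h n x - h n x
            = h n x * (Real.sqrt (χn n g x) - 1) by ring, abs_mul, abs_of_pos hb0]
      have e2 : Real.sqrt (χn n g x) * h n x
          = Real.sqrt (χ g x * h n (g • x)) * Real.sqrt (h n x) := by
        have hr : χn n g x = χ g x * h n (g • x) / h n x := rfl
        rw [hr, key1]
      have e3 : |Real.sqrt (χ g x * h n (g • x)) * Real.sqrt (h n x) - h n x|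
          = Real.sqrt (h n x) * |Real.sqrt (χ g x * h n (g • x)) - Real.sqrt (h n x)| := by
        rw [show Real.sqrt (χ g x * h n (g • x)) * Real.sqrt (h n x) - h n x
            = Real.sqrt (h n x) * (Real.sqrt (χ g x * h n (g • x)) - Real.sqrt (h n x)) by
              rw [mul_sub, hbb]; ring,
          abs_mul, abs_of_nonneg (Real.sqrt_nonneg _)]
      rw [e1, e2, e3]
    -- the Cauchy–Schwarz estimate
    have CS : ∀ n (g : G), ∫⁻ x, ENNReal.ofReal |Real.sqrt (χn n g x) - 1| ∂(μn n)
        ≤ (∫⁻ x, ENNReal.ofReal |χ g x * h n (g • x) - h n x| ∂μ) ^ (1/2 : ℝ) := by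
      intro n g
      have hm1 : Measurable fun x => ENNReal.ofReal (Real.sqrt (h n x)) :=
        ((hhmeas n).sqrt).ennreal_ofReal
      have hm2 : Measurable fun x =>
          ENNReal.ofReal |Real.sqrt (χ g x * h n (g • x)) - Real.sqrt (h n x)| :=
        (((((hχg g).mul ((hhmeas n).comp (hsmul g))).sqrt).sub ((hhmeas n).sqrt)).abs).ennreal_ofReal
      have hmabs : Measurable fun x => ENNReal.ofReal |Real.sqrt (χn n g x) - 1| :=
        ((((hχng n g).sqrt).sub measurable_const).abs).ennreal_ofReal
      rw [hμn_def]
      simp only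
      rw [lintegral_withDensity_eq_lintegral_mul _ (hHmeas n) hmabs]
      have e1 : ∀ x, (H n * fun x => ENNReal.ofReal |Real.sqrt (χn n g x) - 1|) x
          = ((fun x => ENNReal.ofReal (Real.sqrt (h n x))) * fun x =>
              ENNReal.ofReal |Real.sqrt (χ g x * h n (g • x)) - Real.sqrt (h n x)|) x := by
        intro x
        show ENNReal.ofReal (h n x) * ENNReal.ofReal |Real.sqrt (χn n g x) - 1|
            = ENNReal.ofReal (Real.sqrt (h n x))
              * ENNReal.ofReal |Real.sqrt (χ g x * h n (g • x)) - Real.sqrt (h n x)|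
        rw [← ENNReal.ofReal_mul (hh_pos n x).le, ptc n g x,
          ENNReal.ofReal_mul (Real.sqrt_nonneg _)]
      rw [lintegral_congr e1]
      have hpq : Real.HolderConjugate 2 2 := Real.HolderConjugate.two_two
      refine le_trans (ENNReal.lintegral_mul_le_Lp_mul_Lq μ hpq
        hm1.aemeasurable hm2.aemeasurable) ?_
      have t1 : ∫⁻ x, (ENNReal.ofReal (Real.sqrt (h n x))) ^ (2:ℝ) ∂μ = 1 := by
        have e2 : ∀ x, (ENNReal.ofReal (Real.sqrt (h n x))) ^ (2:ℝ) = H n x := by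
          intro x
          rw [ENNReal.ofReal_rpow_of_nonneg (Real.sqrt_nonneg _) (by norm_num)]
          rw [hH_def]
          congr 1
          rw [show (2:ℝ) = ((2:ℕ):ℝ) by norm_num, Real.rpow_natCast, Real.sq_sqrt (hh_pos n x).le]
        rw [lintegral_congr e2]
        exact hHint n
      have t2 : ∫⁻ x, (ENNReal.ofReal
            |Real.sqrt (χ g x * h n (g • x)) - Real.sqrt (h n x)|) ^ (2:ℝ) ∂μ
          ≤ ∫⁻ x, ENNReal.ofReal |χ g x * h n (g • x) - h n x| ∂μ := by
        refine lintegral_mono fun x => ?_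
        rw [ENNReal.ofReal_rpow_of_nonneg (abs_nonneg _) (by norm_num)]
        refine ENNReal.ofReal_le_ofReal ?_
        rw [show (2:ℝ) = ((2:ℕ):ℝ) by norm_num, Real.rpow_natCast, sq_abs]
        exact sq_sqrt_sub_le (mul_nonneg (hχnonneg g x) (hh_pos n (g • x)).le) (hh_pos n x).le
      rw [t1, ENNReal.one_rpow, one_mul]
      exact ENNReal.rpow_le_rpow t2 (by norm_num)
    -- choose N
    obtain ⟨N₁, hN₁⟩ := hfinv K⁻¹ hK.inv (ε ^ 2 / 2) (by positivity)
    obtain ⟨N₂, hN₂⟩ := exists_pow_lt_of_lt_one (show (0:ℝ) < ε ^ 2 / 4 by positivity)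
      (show (1/2:ℝ) < 1 by norm_num)
    refine ⟨max N₁ N₂, fun n hn g hg => ?_⟩
    have hn1 : N₁ ≤ n := le_trans (le_max_left _ _) hn
    have hn2 : N₂ ≤ n := le_trans (le_max_right _ _) hn
    have hcsmall : c n ≤ ε ^ 2 / 4 := by
      calc c n ≤ c N₂ := pow_le_pow_of_le_one (by norm_num) (by norm_num) hn2
        _ ≤ ε ^ 2 / 4 := (hN₂).le
    -- the L¹ bound from the hypothesis
    have hA : ∫ x, |f n (g • x) * χ g x - f n x| ∂μ ≤ ε ^ 2 / 2 := by
      have := hN₁ n hn1 g⁻¹ (by simpa using hg)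
      simpa using this
    have hB1 : ∫⁻ x, ENNReal.ofReal |f n (g • x) * χ g x - f n x| ∂μ
        ≤ ENNReal.ofReal (ε ^ 2 / 2) := by
      rw [← ofReal_integral_eq_lintegral_ofReal (hDint n g).abs
        (Filter.Eventually.of_forall fun x => abs_nonneg _)]
      exact ENNReal.ofReal_le_ofReal hA
    -- the numerator bound
    have hnum : ∫⁻ x, ENNReal.ofReal |χ g x * h n (g • x) - h n x| ∂μ
        ≤ ENNReal.ofReal (ε ^ 2) := by
      calc ∫⁻ x, ENNReal.ofReal |χ g x * h n (g • x) - h n x| ∂μ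
          ≤ ∫⁻ x, (ENNReal.ofReal |f n (g • x) * χ g x - f n x|
              + ENNReal.ofReal (c n) * ENNReal.ofReal |χ g x - 1|) ∂μ := by
            refine lintegral_mono fun x => ?_
            rw [← ENNReal.ofReal_mul (hc_pos n).le,
              ← ENNReal.ofReal_add (abs_nonneg _) (mul_nonneg (hc_pos n).le (abs_nonneg _))]
            exact ENNReal.ofReal_le_ofReal (pt n g x)
        _ = (∫⁻ x, ENNReal.ofReal |f n (g • x) * χ g x - f n x| ∂μ)
            + ENNReal.ofReal (c n) * ∫⁻ x, ENNReal.ofReal |χ g x - 1| ∂μ := by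
            rw [lintegral_add_left ((hDmeas n g).abs).ennreal_ofReal,
              lintegral_const_mul _ (f := fun x => ENNReal.ofReal |χ g x - 1|) (((hχg g).sub measurable_const).abs).ennreal_ofReal]
        _ ≤ ENNReal.ofReal (ε ^ 2 / 2) + ENNReal.ofReal (c n) * 2 := by
            exact add_le_add hB1 (mul_le_mul_right (hB2 g) _)
        _ ≤ ENNReal.ofReal (ε ^ 2) := by
            rw [show (2:ℝ≥0∞) = ENNReal.ofReal 2 by norm_num, ← ENNReal.ofReal_mul (hc_pos n).le,
              ← ENNReal.ofReal_add (by positivity) (by positivity)]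
            refine ENNReal.ofReal_le_ofReal ?_
            nlinarith [hc_pos n]
    -- conclude
    have hfinal : ∫⁻ x, ENNReal.ofReal |Real.sqrt (χn n g x) - 1| ∂(μn n)
        ≤ ENNReal.ofReal ε := by
      refine le_trans (CS n g) ?_
      calc (∫⁻ x, ENNReal.ofReal |χ g x * h n (g • x) - h n x| ∂μ) ^ (1/2 : ℝ)
          ≤ (ENNReal.ofReal (ε ^ 2)) ^ (1/2 : ℝ) := ENNReal.rpow_le_rpow hnum (by norm_num)
        _ = ENNReal.ofReal ε := by
            have h2 : (ENNReal.ofReal ε) ^ (2:ℝ) = ENNReal.ofReal (ε ^ 2) := by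
              rw [ENNReal.ofReal_rpow_of_nonneg hε.le (by norm_num : (0:ℝ) ≤ 2),
                show (2:ℝ) = ((2:ℕ):ℝ) by norm_num, Real.rpow_natCast]
            rw [← h2, ← ENNReal.rpow_mul]
            norm_num
    have hmeasint : Measurable fun x => |Real.sqrt (χn n g x) - 1| :=
      (((hχng n g).sqrt).sub measurable_const).abs
    rw [integral_eq_lintegral_of_nonneg_ae (Filter.Eventually.of_forall fun x => abs_nonneg _)
      hmeasint.aestronglyMeasurable]
    exact ENNReal.toReal_le_of_le_ofReal hε.le hfinal
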